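/- For every positive integer p and every integer k with 1 ≤ k ≤ p, the sum over m from 1 to p of (-1)^m (1/m) · C(p, m+k) equals -C(p,k) · (H_p - H_k), where H_n denotes the n-th harmonic number and C(p, m+k) = 0 when m + k > p. -/

import Mathlib

open Finset in
private lemma stmt3_aux : ∀ p : ℕ, ∀ k ≤ p,
    ∑ m ∈ Finset.Icc 1 p, (-1 : ℚ)^m * (1 / (m : ℚ)) * (p.choose (m + k) : ℚ)
      = - (p.choose k : ℚ) * (harmonic p - harmonic k) := by
  intro p
  induction p with
  | zero =>
    intro k hk
    interval_cases k
    simp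
  | succ p ih =>
    intro k hk
    rcases eq_or_lt_of_le hk with rfl | hk'
    · -- k = p + 1 : everything vanishes
      have hz : ∀ m ∈ Finset.Icc 1 (p+1),
          (-1 : ℚ)^m * (1 / (m : ℚ)) * ((p+1).choose (m + (p+1)) : ℚ) = 0 := by
        intro m hm
        have hm1 : 1 ≤ m := (Finset.mem_Icc.mp hm).1
        rw [Nat.choose_eq_zero_of_lt (by omega : p + 1 < m + (p + 1))]
        simp
      rw [Finset.sum_eq_zero hz]
      simp
    · have hk2 : k ≤ p := Nat.lt_succ_iff.mp hk'
      have hsplit : ∑ m ∈ Finset.Icc 1 (p+1),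
            (-1 : ℚ)^m * (1 / (m : ℚ)) * ((p+1).choose (m + k) : ℚ)
          = (∑ m ∈ Finset.Icc 1 (p+1),
              (-1 : ℚ)^m * (1 / (m : ℚ)) * (p.choose (m - 1 + k) : ℚ))
          + (∑ m ∈ Finset.Icc 1 (p+1),
              (-1 : ℚ)^m * (1 / (m : ℚ)) * (p.choose (m + k) : ℚ)) := by
        rw [← Finset.sum_add_distrib]
        apply Finset.sum_congr rfl
        intro m hm
        have hm1 : 1 ≤ m := (Finset.mem_Icc.mp hm).1
        obtain ⟨m', rfl⟩ := Nat.exists_eq_add_of_le hm1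
        have h1 : 1 + m' + k = (m' + k) + 1 := by omega
        have h2 : 1 + m' - 1 + k = m' + k := by omega
        rw [h1, h2, Nat.choose_succ_succ' p (m' + k)]
        push_cast
        ring
      rw [hsplit]
      have hB : ∑ m ∈ Finset.Icc 1 (p+1),
            (-1 : ℚ)^m * (1 / (m : ℚ)) * (p.choose (m + k) : ℚ)
          = - (p.choose k : ℚ) * (harmonic p - harmonic k) := by
        rw [Finset.sum_Icc_succ_top (by omega : 1 ≤ p + 1),
          Nat.choose_eq_zero_of_lt (by omega : p < p + 1 + k)]
        simpa using ih k hk2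
      rw [hB]
      rcases Nat.eq_zero_or_pos k with rfl | hk1
      · -- k = 0
        have hA : ∑ m ∈ Finset.Icc 1 (p+1),
              (-1 : ℚ)^m * (1 / (m : ℚ)) * (p.choose (m - 1 + 0) : ℚ)
            = -1 / (p + 1) := by
          have hcongr : ∀ m ∈ Finset.Icc 1 (p+1),
              (-1 : ℚ)^m * (1 / (m : ℚ)) * (p.choose (m - 1 + 0) : ℚ)
                = (-1 : ℚ)^m * ((p+1).choose m : ℚ) / (p + 1) := by
            intro m hm
            have hm1 : 1 ≤ m := (Finset.mem_Icc.mp hm).1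
            obtain ⟨m', rfl⟩ := Nat.exists_eq_add_of_le hm1
            rw [show 1 + m' = m' + 1 from by omega]
            have key : ((p + 1 : ℕ) : ℚ) * (p.choose m' : ℚ)
                = ((p+1).choose (m' + 1) : ℚ) * ((m' + 1 : ℕ) : ℚ) := by
              exact_mod_cast congrArg (Nat.cast (R := ℚ)) (Nat.add_one_mul_choose_eq p m')
            rw [show m' + 1 - 1 + 0 = m' from by omega]
            have hm0 : ((m' : ℚ) + 1) ≠ 0 := by positivity
            have hp0 : ((p : ℚ) + 1) ≠ 0 := by positivity
            push_cast at key ⊢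
            field_simp
            linear_combination key
          rw [Finset.sum_congr rfl hcongr, ← Finset.sum_div]
          have halt : ∑ m ∈ Finset.Icc 1 (p+1), (-1 : ℚ)^m * ((p+1).choose m : ℚ) = -1 := by
            have h := Int.alternating_sum_range_choose (n := p + 1)
            rw [if_neg (by omega)] at h
            have h' : ∑ m ∈ Finset.range (p + 2), (-1 : ℚ)^m * ((p+1).choose m : ℚ) = 0 := by
              exact_mod_cast h
            rw [Finset.range_eq_Ico,
              Finset.sum_eq_sum_Ico_succ_bot (by omega : 0 < p + 2),
              show p + 2 = (p + 1) + 1 from rfl, Finset.Ico_add_one_right_eq_Icc] at h'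
            simp only [pow_zero, Nat.choose_zero_right, Nat.cast_one, one_mul] at h'
            linarith
          rw [halt]
        rw [hA, harmonic_succ]
        have hp0 : ((p : ℚ) + 1) ≠ 0 := by positivity
        simp only [Nat.choose_zero_right, Nat.cast_one, harmonic_zero]
        push_cast
        field_simp
        ring
      · -- k ≥ 1
        obtain ⟨k', rfl⟩ := Nat.exists_eq_succ_of_ne_zero (by omega : k ≠ 0)
        have hA : ∑ m ∈ Finset.Icc 1 (p+1),
              (-1 : ℚ)^m * (1 / (m : ℚ)) * (p.choose (m - 1 + (k' + 1)) : ℚ)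
            = - (p.choose k' : ℚ) * (harmonic p - harmonic k') := by
          have hcongr : ∀ m ∈ Finset.Icc 1 (p+1),
              (-1 : ℚ)^m * (1 / (m : ℚ)) * (p.choose (m - 1 + (k' + 1)) : ℚ)
                = (-1 : ℚ)^m * (1 / (m : ℚ)) * (p.choose (m + k') : ℚ) := by
            intro m hm
            have hm1 : 1 ≤ m := (Finset.mem_Icc.mp hm).1
            rw [show m - 1 + (k' + 1) = m + k' from by omega]
          rw [Finset.sum_congr rfl hcongr,
            Finset.sum_Icc_succ_top (by omega : 1 ≤ p + 1),
            Nat.choose_eq_zero_of_lt (by omega : p < p + 1 + k')]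
          simpa using ih k' (by omega)
        rw [hA]
        have key : ((p + 1 : ℕ) : ℚ) * (p.choose k' : ℚ)
            = ((p+1).choose (k' + 1) : ℚ) * ((k' + 1 : ℕ) : ℚ) := by
          exact_mod_cast congrArg (Nat.cast (R := ℚ)) (Nat.add_one_mul_choose_eq p k')
        have hc : ((p+1).choose (k' + 1) : ℚ) = (p.choose k' : ℚ) + (p.choose (k' + 1) : ℚ) := by
          exact_mod_cast congrArg (Nat.cast (R := ℚ)) (Nat.choose_succ_succ' p k')
        rw [show k'.succ = k' + 1 from rfl, harmonic_succ p, harmonic_succ k', hc]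
        have hp0 : ((p : ℚ) + 1) ≠ 0 := by positivity
        have hk0 : ((k' : ℚ) + 1) ≠ 0 := by positivity
        have hv : ((p : ℚ) + 1) * ((p : ℚ) + 1)⁻¹ = 1 := mul_inv_cancel₀ hp0
        have hu : ((k' : ℚ) + 1) * ((k' : ℚ) + 1)⁻¹ = 1 := mul_inv_cancel₀ hk0
        rw [hc] at key
        push_cast at key ⊢
        set a := (p.choose (k' + 1) : ℚ)
        set b := (p.choose k' : ℚ)
        set u := ((k' : ℚ) + 1)⁻¹
        set v := ((p : ℚ) + 1)⁻¹
        linear_combination (-(u * v)) * key + (b * u) * hv + (-((b + a) * v)) * hu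

theorem stmt3 (p k : ℕ) (hp : 0 < p) (hk1 : 1 ≤ k) (hkp : k ≤ p) :
    ∑ m ∈ Finset.Icc 1 p, (-1 : ℚ)^m * (1 / (m : ℚ)) * (p.choose (m + k) : ℚ)
      = - (p.choose k : ℚ) * (harmonic p - harmonic k) := by
  exact stmt3_aux p k hkp
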